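/- Let M be a real symmetric n×n matrix, λ ∈ ℝ, and let F_n = {Y ∈ ℝ^{n×n} : Y is symmetric positive semidefinite and 0 ≤ Y_{ij} ≤ 1 for all i, j}. A matrix Ŷ ∈ F_n maximizes ⟨Y, M⟩ − λ·tr(Y) over Y ∈ F_n if and only if there exist matrices U, L ∈ ℝ^{n×n} with all entries nonnegative such that: L_{ij} Ŷ_{ij} = 0 and U_{ij}(Ŷ_{ij} − 1) = 0 for all i, j; the matrix M − λI − U + L is negative semidefinite; and (M − λI − U + L) Ŷ = 0. -/

import Mathlib

open Matrix Filter Finset Metric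

attribute [local instance] Matrix.frobeniusNormedAddCommGroup Matrix.frobeniusNormedSpace

/-- Feasible set of the recovery SDP: symmetric PSD matrices with entries in `[0,1]`. -/
def FeasSDP {d : ℕ} (Y : Matrix (Fin d) (Fin d) ℝ) : Prop :=
  Y.PosSemidef ∧ ∀ i j, 0 ≤ Y i j ∧ Y i j ≤ 1

/-- Trace inner product `⟨X, Y⟩ = Σ_{i,j} X_{ij} Y_{ij}`. -/
noncomputable def mip {d : ℕ} (X Y : Matrix (Fin d) (Fin d) ℝ) : ℝ :=
  ∑ i, ∑ j, X i j * Y i j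

section Helpers
variable {n : ℕ}

attribute [local instance] Matrix.frobeniusNormedAddCommGroup Matrix.frobeniusNormedSpace



lemma mip_comm (X Y : Matrix (Fin n) (Fin n) ℝ) : mip X Y = mip Y X := by
  simp [mip, mul_comm]

lemma mip_sub_right (X Y Z : Matrix (Fin n) (Fin n) ℝ) :
    mip X (Y - Z) = mip X Y - mip X Z := by
  simp [mip, Matrix.sub_apply, mul_sub, Finset.sum_sub_distrib]

lemma mip_add_right (X Y Z : Matrix (Fin n) (Fin n) ℝ) :
    mip X (Y + Z) = mip X Y + mip X Z := by
  simp [mip, Matrix.add_apply, mul_add, Finset.sum_add_distrib]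

lemma mip_smul_right (c : ℝ) (X Y : Matrix (Fin n) (Fin n) ℝ) :
    mip X (c • Y) = c * mip X Y := by
  simp [mip, Finset.mul_sum]; ring_nf; simp [mul_comm, mul_assoc, mul_left_comm]

lemma quadform_eq (S : Matrix (Fin n) (Fin n) ℝ) (x : Fin n → ℝ) :
    x ⬝ᵥ S *ᵥ x = ∑ i, ∑ j, x i * S i j * x j := by
  simp [dotProduct, mulVec, Finset.mul_sum, mul_assoc, mul_comm, mul_left_comm]

lemma psd_quad (S : Matrix (Fin n) (Fin n) ℝ) (hS : S.PosSemidef) (x : Fin n → ℝ) :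
    0 ≤ x ⬝ᵥ S *ᵥ x := by
  simpa using hS.dotProduct_mulVec_nonneg x

lemma psd_smul {S : Matrix (Fin n) (Fin n) ℝ} (hS : S.PosSemidef) {c : ℝ} (hc : 0 ≤ c) :
    (c • S).PosSemidef := by
  refine Matrix.PosSemidef.of_dotProduct_mulVec_nonneg ?_ fun x => ?_
  · have h := hS.1
    unfold Matrix.IsHermitian at *
    rw [conjTranspose_smul, h]
    simp
  · have := hS.dotProduct_mulVec_nonneg x
    rw [Matrix.smul_mulVec, dotProduct_smul]
    simpa using mul_nonneg hc (by simpa using this)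



lemma herm_apply {S : Matrix (Fin n) (Fin n) ℝ} (hS : S.IsHermitian) (i j : Fin n) :
    S j i = S i j := by
  have := congrFun (congrFun hS i) j
  simpa [Matrix.conjTranspose_apply] using this

lemma mip_eq_sum_quad (S : Matrix (Fin n) (Fin n) ℝ) (B : Matrix (Fin n) (Fin n) ℝ) :
    mip S (Bᵀ * B) = ∑ k, (B k) ⬝ᵥ S *ᵥ (B k) :=
  calc mip S (Bᵀ * B) = ∑ i, ∑ j, ∑ k, S i j * (B k i * B k j) := by
        simp [mip, Matrix.mul_apply, transpose_apply, Finset.mul_sum]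
    _ = ∑ i, ∑ k, ∑ j, S i j * (B k i * B k j) :=
        Finset.sum_congr rfl fun i _ => Finset.sum_comm
    _ = ∑ k, ∑ i, ∑ j, S i j * (B k i * B k j) := Finset.sum_comm
    _ = ∑ k, (B k) ⬝ᵥ S *ᵥ (B k) := by
        refine Finset.sum_congr rfl fun k _ => ?_
        rw [quadform_eq]
        exact Finset.sum_congr rfl fun i _ => Finset.sum_congr rfl fun j _ => by ring

lemma psd_mip_nonneg {S Y : Matrix (Fin n) (Fin n) ℝ} (hS : S.PosSemidef) (hY : Y.PosSemidef) :
    0 ≤ mip S Y := by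
  obtain ⟨B, hB⟩ := (by open scoped MatrixOrder Matrix.Norms.L2Operator in exact CStarAlgebra.nonneg_iff_eq_star_mul_self.mp hY.nonneg : ∃ B : Matrix (Fin n) (Fin n) ℝ, Y = Bᴴ * B)
  have hB' : Y = Bᵀ * B := by simpa using hB
  rw [hB', mip_eq_sum_quad S B]
  exact Finset.sum_nonneg fun k _ => by simpa using hS.dotProduct_mulVec_nonneg (B k)

lemma psd_mip_zero {S Y : Matrix (Fin n) (Fin n) ℝ} (hS : S.PosSemidef) (hY : Y.PosSemidef)
    (h : mip S Y = 0) : S * Y = 0 := by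
  obtain ⟨B, hB⟩ := (by open scoped MatrixOrder Matrix.Norms.L2Operator in exact CStarAlgebra.nonneg_iff_eq_star_mul_self.mp hY.nonneg : ∃ B : Matrix (Fin n) (Fin n) ℝ, Y = Bᴴ * B)
  have hB' : Y = Bᵀ * B := by simpa using hB
  rw [hB', mip_eq_sum_quad S B] at h
  have hnn : ∀ k ∈ (Finset.univ : Finset (Fin n)), 0 ≤ (B k) ⬝ᵥ S *ᵥ (B k) :=
    fun k _ => by simpa using hS.dotProduct_mulVec_nonneg (B k)
  have hSv : ∀ k, S *ᵥ (B k) = 0 := fun k =>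
    (hS.dotProduct_mulVec_zero_iff (B k)).mp
      (by simpa using (Finset.sum_eq_zero_iff_of_nonneg hnn).mp h k (Finset.mem_univ k))
  have hSBt : S * Bᵀ = 0 := by
    ext i k
    have := congrFun (hSv k) i
    simpa [Matrix.mul_apply, Matrix.mulVec, dotProduct, transpose_apply] using this
  rw [hB', ← Matrix.mul_assoc, hSBt, Matrix.zero_mul]

lemma single_quad (S : Matrix (Fin n) (Fin n) ℝ) (a b : Fin n) :
    (Pi.single a 1 : Fin n → ℝ) ⬝ᵥ S *ᵥ (Pi.single b 1 : Fin n → ℝ) = S a b := by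
  rw [Matrix.mulVec_single]
  simp [dotProduct, Pi.single_apply, Finset.sum_ite_eq']

lemma psd_abs_entry_le {S : Matrix (Fin n) (Fin n) ℝ} (hS : S.PosSemidef) (i j : Fin n) :
    |S i j| ≤ (S i i + S j j) / 2 := by
  have key : ∀ c : ℝ, 0 ≤ S i i + c * S i j + c * S j i + c * c * S j j := by
    intro c
    have h := hS.dotProduct_mulVec_nonneg ((Pi.single i 1 : Fin n → ℝ) + c • (Pi.single j 1 : Fin n → ℝ))
    simp only [star_trivial] at h
    rw [Matrix.mulVec_add, Matrix.mulVec_smul, dotProduct_add, add_dotProduct,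
      add_dotProduct, dotProduct_smul, smul_dotProduct, smul_dotProduct,
      dotProduct_smul, single_quad, single_quad, single_quad, single_quad] at h
    simp only [smul_eq_mul] at h; nlinarith [h]
  have hsym := herm_apply hS.1 i j
  have h1 := key 1
  have h2 := key (-1)
  rcases eq_or_ne i j with rfl | hij
  · have hd : 0 ≤ S i i := by nlinarith
    rw [abs_of_nonneg hd]; linarith
  · rw [abs_le]; constructor <;> nlinarith
attribute [local instance] Matrix.frobeniusNormedAddCommGroup Matrix.frobeniusNormedSpace


lemma entry_abs_le_norm (A : Matrix (Fin n) (Fin n) ℝ) (i j : Fin n) : |A i j| ≤ ‖A‖ := by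
  rw [Matrix.frobenius_norm_def]
  have h1 : |A i j| ^ (2:ℝ) ≤ ∑ i', ∑ j', ‖A i' j'‖ ^ (2:ℝ) := by
    calc |A i j| ^ (2:ℝ) = ‖A i j‖ ^ (2:ℝ) := by rw [Real.norm_eq_abs]
      _ ≤ ∑ j', ‖A i j'‖ ^ (2:ℝ) := Finset.single_le_sum
            (fun j' _ => Real.rpow_nonneg (norm_nonneg _) _) (Finset.mem_univ j)
      _ ≤ ∑ i', ∑ j', ‖A i' j'‖ ^ (2:ℝ) := Finset.single_le_sum
            (fun i' _ => Finset.sum_nonneg fun j' _ => Real.rpow_nonneg (norm_nonneg _) _)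
            (Finset.mem_univ i)
  have h2 : (|A i j| ^ (2:ℝ)) ^ (1/2:ℝ) ≤ (∑ i', ∑ j', ‖A i' j'‖ ^ (2:ℝ)) ^ (1/2:ℝ) :=
    Real.rpow_le_rpow (Real.rpow_nonneg (abs_nonneg _) _) h1 (by norm_num)
  calc |A i j| = (|A i j| ^ (2:ℝ)) ^ (1/2:ℝ) := by
        rw [← Real.rpow_mul (abs_nonneg _)]
        norm_num
    _ ≤ _ := h2

lemma norm_le_of_entries (A : Matrix (Fin n) (Fin n) ℝ) (R : ℝ) (hR : 0 ≤ R)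
    (h : ∀ i j, |A i j| ≤ R) : ‖A‖ ≤ n * R := by
  rw [Matrix.frobenius_norm_def]
  have h1 : ∑ i, ∑ j, ‖A i j‖ ^ (2:ℝ) ≤ (n * R) ^ (2:ℝ) := by
    calc ∑ i, ∑ j, ‖A i j‖ ^ (2:ℝ) ≤ ∑ _i : Fin n, ∑ _j : Fin n, R ^ (2:ℝ) := by
          refine Finset.sum_le_sum fun i _ => Finset.sum_le_sum fun j _ => ?_
          exact Real.rpow_le_rpow (norm_nonneg _) (by rw [Real.norm_eq_abs]; exact h i j)
            (by norm_num)
      _ = (n:ℝ) * ((n:ℝ) * R ^ (2:ℝ)) := by simp [mul_assoc]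
      _ ≤ (n * R) ^ (2:ℝ) := by
          rw [show ((2:ℝ)) = ((2:ℕ):ℝ) by norm_num, Real.rpow_natCast, Real.rpow_natCast]
          ring_nf
          nlinarith [sq_nonneg R, Nat.cast_nonneg (α := ℝ) n]
  calc (∑ i, ∑ j, ‖A i j‖ ^ (2:ℝ)) ^ (1/2:ℝ) ≤ ((n * R) ^ (2:ℝ)) ^ (1/2:ℝ) :=
        Real.rpow_le_rpow (Finset.sum_nonneg fun i _ => Finset.sum_nonneg fun j _ =>
          Real.rpow_nonneg (norm_nonneg _) _) h1 (by norm_num)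
    _ = n * R := by
        rw [← Real.rpow_mul (by positivity)]
        norm_num
attribute [local instance] Matrix.frobeniusNormedAddCommGroup Matrix.frobeniusNormedSpace


/-- entry evaluation as a continuous linear map -/
noncomputable def entryCLM (i j : Fin n) : Matrix (Fin n) (Fin n) ℝ →L[ℝ] ℝ :=
  LinearMap.toContinuousLinearMap
    { toFun := fun X => X i j
      map_add' := fun _ _ => rfl
      map_smul' := fun _ _ => rfl }

lemma tendsto_entry {Z : ℕ → Matrix (Fin n) (Fin n) ℝ} {W : Matrix (Fin n) (Fin n) ℝ}
    (h : Tendsto Z atTop (nhds W)) (i j : Fin n) :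
    Tendsto (fun k => Z k i j) atTop (nhds (W i j)) :=
  ((entryCLM i j).continuous.tendsto W).comp h

def Kset (p : ℝ) : Set (Matrix (Fin n) (Fin n) ℝ) :=
  {X | ∃ U L S : Matrix (Fin n) (Fin n) ℝ,
    (∀ i j, 0 ≤ U i j) ∧ (∀ i j, 0 ≤ L i j) ∧ S.PosSemidef ∧
    (∑ i, ∑ j, U i j) ≤ p ∧ X = U - L - S}
end Helpers

section Part2
variable {n : ℕ}

lemma convex_Kset (p : ℝ) : Convex ℝ (Kset (n := n) p) := by
  rintro X ⟨U1, L1, S1, hU1, hL1, hS1, hsum1, rfl⟩ Y ⟨U2, L2, S2, hU2, hL2, hS2, hsum2, rfl⟩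
    a b ha hb hab
  refine ⟨a • U1 + b • U2, a • L1 + b • L2, a • S1 + b • S2, ?_, ?_, ?_, ?_, ?_⟩
  · intro i j
    have := mul_nonneg ha (hU1 i j); have := mul_nonneg hb (hU2 i j)
    simp only [Matrix.add_apply, Matrix.smul_apply, smul_eq_mul]
    linarith
  · intro i j
    have := mul_nonneg ha (hL1 i j); have := mul_nonneg hb (hL2 i j)
    simp only [Matrix.add_apply, Matrix.smul_apply, smul_eq_mul]
    linarith
  · exact (psd_smul hS1 ha).add (psd_smul hS2 hb)
  · have : ∑ i, ∑ j, (a • U1 + b • U2) i j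
        = a * (∑ i, ∑ j, U1 i j) + b * (∑ i, ∑ j, U2 i j) := by
      simp [Matrix.add_apply, Matrix.smul_apply, smul_eq_mul, Finset.sum_add_distrib,
        Finset.mul_sum]
    rw [this]
    calc a * (∑ i, ∑ j, U1 i j) + b * (∑ i, ∑ j, U2 i j) ≤ a * p + b * p := by
          have := mul_le_mul_of_nonneg_left hsum1 ha
          have := mul_le_mul_of_nonneg_left hsum2 hb
          linarith
      _ = p := by rw [← add_mul, hab, one_mul]
  · module

end Part2

section Part3
variable {n : ℕ}

lemma isClosed_Kset (p : ℝ) : IsClosed (Kset (n := n) p) := by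
  haveI : SequentialSpace (Matrix (Fin n) (Fin n) ℝ) := (inferInstance : SequentialSpace (Fin n → Fin n → ℝ))
  refine IsSeqClosed.isClosed ?_
  intro Xs X hmem hx
  choose U L S hU hL hS hsum hXeq using hmem
  -- bound on the norms of Xs
  obtain ⟨R0, hR0⟩ : ∃ R0, ∀ k, ‖Xs k‖ ≤ R0 := by
    have hb : BddAbove (Set.range fun k => ‖Xs k‖) := (hx.norm).bddAbove_range
    obtain ⟨R0, hR0⟩ := hb
    exact ⟨R0, fun k => hR0 (Set.mem_range_self k)⟩
  set pm : ℝ := max p 0 with hpm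
  set Rm : ℝ := max R0 0 with hRm
  have hXb : ∀ k i j, |Xs k i j| ≤ Rm := fun k i j =>
    le_trans (entry_abs_le_norm _ i j) (le_trans (hR0 k) (le_max_left _ _))
  -- entry bounds on U
  have hUb : ∀ k i j, |U k i j| ≤ pm := by
    intro k i j
    rw [abs_of_nonneg (hU k i j)]
    calc U k i j ≤ ∑ j', U k i j' := Finset.single_le_sum
          (fun j' _ => hU k i j') (Finset.mem_univ j)
      _ ≤ ∑ i', ∑ j', U k i' j' := Finset.single_le_sum
          (fun i' _ => Finset.sum_nonneg fun j' _ => hU k i' j') (Finset.mem_univ i)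
      _ ≤ pm := le_trans (hsum k) (le_max_left _ _)
  -- L entries in terms of the rest
  have hLentry : ∀ k i j, L k i j = U k i j - S k i j - Xs k i j := by
    intro k i j
    have := congrFun (congrFun (hXeq k) i) j
    simp only [Matrix.sub_apply] at this
    linarith
  -- diagonal bound on S
  have hSdiag : ∀ k i, S k i i ≤ pm + Rm := by
    intro k i
    have h1 : 0 ≤ L k i i := hL k i i
    rw [hLentry k i i] at h1
    have h2 : U k i i ≤ pm := (abs_le.mp (hUb k i i)).2
    have h3 : -Rm ≤ Xs k i i := (abs_le.mp (hXb k i i)).1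
    linarith
  have hSb : ∀ k i j, |S k i j| ≤ pm + Rm := by
    intro k i j
    refine le_trans (psd_abs_entry_le (hS k) i j) ?_
    have := hSdiag k i
    have := hSdiag k j
    linarith
  have hpm0 : (0:ℝ) ≤ pm := le_max_right _ _
  have hRm0 : (0:ℝ) ≤ Rm := le_max_right _ _
  -- extract convergent subsequence of (U k, S k)
  set RR : ℝ := n * pm + n * (pm + Rm) with hRR
  have hZmem : ∀ k, ((U k, S k) :
      Matrix (Fin n) (Fin n) ℝ × Matrix (Fin n) (Fin n) ℝ) ∈ closedBall 0 RR := by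
    intro k
    rw [mem_closedBall_zero_iff]
    have h1 : ‖U k‖ ≤ n * pm := norm_le_of_entries _ _ hpm0 (hUb k)
    have h2 : ‖S k‖ ≤ n * (pm + Rm) := norm_le_of_entries _ _ (by linarith) (hSb k)
    have hn1 : (0:ℝ) ≤ n * pm := by positivity
    have hn2 : (0:ℝ) ≤ n * (pm + Rm) := by positivity
    calc ‖((U k, S k) : _ × _)‖ = max ‖U k‖ ‖S k‖ := rfl
      _ ≤ RR := max_le (by linarith) (by linarith)
  obtain ⟨W, -, φ, hφ, hWconv⟩ :=
    (isCompact_closedBall (0 : Matrix (Fin n) (Fin n) ℝ × Matrix (Fin n) (Fin n) ℝ) RR).tendsto_subseq hZmem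
  have hUconv : Tendsto (fun k => U (φ k)) atTop (nhds W.1) :=
    ((continuous_fst.tendsto W).comp hWconv)
  have hSconv : Tendsto (fun k => S (φ k)) atTop (nhds W.2) :=
    ((continuous_snd.tendsto W).comp hWconv)
  have hXconv : Tendsto (fun k => Xs (φ k)) atTop (nhds X) :=
    hx.comp hφ.tendsto_atTop
  set Ui := W.1
  set Si := W.2
  set Li : Matrix (Fin n) (Fin n) ℝ := Ui - Si - X with hLi
  refine ⟨Ui, Li, Si, ?_, ?_, ?_, ?_, ?_⟩
  · intro i j
    exact ge_of_tendsto' (tendsto_entry hUconv i j) (fun k => hU (φ k) i j)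
  · intro i j
    have ht : Tendsto (fun k => U (φ k) i j - S (φ k) i j - Xs (φ k) i j) atTop
        (nhds (Ui i j - Si i j - X i j)) :=
      ((tendsto_entry hUconv i j).sub (tendsto_entry hSconv i j)).sub
        (tendsto_entry hXconv i j)
    have heq : (fun k => U (φ k) i j - S (φ k) i j - Xs (φ k) i j)
        = fun k => L (φ k) i j := by
      funext k; rw [hLentry (φ k) i j]
    rw [heq] at ht
    have : 0 ≤ Ui i j - Si i j - X i j :=
      ge_of_tendsto' ht (fun k => hL (φ k) i j)
    simpa [hLi, Matrix.sub_apply] using this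
  · refine Matrix.PosSemidef.of_dotProduct_mulVec_nonneg ?_ ?_
    · have : ∀ i j, Si j i = Si i j := by
        intro i j
        exact tendsto_nhds_unique
          ((tendsto_entry hSconv j i))
          (by
            have heq : (fun k => S (φ k) j i) = fun k => S (φ k) i j := by
              funext k; exact herm_apply (hS (φ k)).1 i j
            rw [heq]
            exact tendsto_entry hSconv i j)
      ext i j
      simp [Matrix.conjTranspose_apply, this j i]
    · intro x
      simp only [star_trivial]
      rw [quadform_eq]
      have ht : Tendsto (fun k => ∑ i, ∑ j, x i * S (φ k) i j * x j) atTop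
          (nhds (∑ i, ∑ j, x i * Si i j * x j)) := by
        refine tendsto_finset_sum _ fun i _ => tendsto_finset_sum _ fun j _ => ?_
        exact (((tendsto_entry hSconv i j).const_mul (x i)).mul_const (x j)).congr
          (fun k => by ring)
      refine ge_of_tendsto' ht (fun k => ?_)
      have := psd_quad _ (hS (φ k)) x
      rw [quadform_eq] at this
      exact this
  · have ht : Tendsto (fun k => ∑ i, ∑ j, U (φ k) i j) atTop
        (nhds (∑ i, ∑ j, Ui i j)) :=
      tendsto_finset_sum _ fun i _ => tendsto_finset_sum _ fun j _ =>
        tendsto_entry hUconv i j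
    exact le_of_tendsto' ht (fun k => hsum (φ k))
  · rw [hLi]; abel

end Part3

section Part4
variable {n : ℕ}

lemma obj_eq (lam : ℝ) (M Y : Matrix (Fin n) (Fin n) ℝ) :
    mip Y M - lam * Y.trace = mip Y (M - lam • (1 : Matrix (Fin n) (Fin n) ℝ)) := by
  rw [mip_sub_right]
  have : mip Y (lam • (1 : Matrix (Fin n) (Fin n) ℝ)) = lam * Y.trace := by
    simp only [mip, Matrix.smul_apply, Matrix.one_apply, smul_eq_mul, mul_ite, mul_one, mul_zero]
    rw [Matrix.trace, Finset.mul_sum]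
    congr 1; ext i
    simp [Finset.sum_ite_eq', Matrix.diag, mul_comm]
  rw [this]

lemma feas_zero : FeasSDP (0 : Matrix (Fin n) (Fin n) ℝ) := by
  refine ⟨Matrix.PosSemidef.zero, fun i j => by simp⟩

lemma mip_zero_left (A : Matrix (Fin n) (Fin n) ℝ) : mip 0 A = 0 := by simp [mip]

lemma rep_clm (f : Matrix (Fin n) (Fin n) ℝ →L[ℝ] ℝ) (X : Matrix (Fin n) (Fin n) ℝ) :
    f X = mip (Matrix.of fun i j => f (single i j 1)) X := by
  conv_lhs => rw [matrix_eq_sum_single X]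
  rw [map_sum]
  unfold mip
  refine Finset.sum_congr rfl fun i _ => ?_
  rw [map_sum]
  refine Finset.sum_congr rfl fun j _ => ?_
  have : single i j (X i j) = X i j • single i j 1 := by
    rw [smul_single, smul_eq_mul, mul_one]
  rw [this, _root_.map_smul, smul_eq_mul, Matrix.of_apply, mul_comm]

lemma psd_vecMulVec (x : Fin n → ℝ) : (vecMulVec x x).PosSemidef := by
  refine Matrix.PosSemidef.of_dotProduct_mulVec_nonneg ?_ ?_
  · ext i j
    simp [Matrix.conjTranspose_apply, vecMulVec_apply, mul_comm]
  · intro y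
    simp only [star_trivial]
    rw [quadform_eq]
    have : ∑ i, ∑ j, y i * (vecMulVec x x) i j * y j = (∑ i, x i * y i) ^ 2 := by
      rw [sq, Finset.sum_mul_sum]
      refine Finset.sum_congr rfl fun i _ => Finset.sum_congr rfl fun j _ => ?_
      simp [vecMulVec_apply]; ring
    rw [this]
    positivity

lemma sum_stdBasisMatrix_entries (i j : Fin n) (c : ℝ) :
    ∑ a, ∑ b, (single i j c) a b = c := by
  have h : ∀ a b : Fin n, (single i j c) a b = if a = i then (if b = j then c else 0) else 0 := by
    intro a b
    simp only [Matrix.single, Matrix.of_apply]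
    by_cases h1 : a = i <;> by_cases h2 : b = j <;> simp [h1, h2] <;> tauto
  simp only [h]
  simp [Finset.sum_ite_eq']

end Part4

section Part5
variable {n : ℕ}

lemma sbm_entry_nonneg (i j : Fin n) {c : ℝ} (hc : 0 ≤ c) (a b : Fin n) :
    0 ≤ (single i j c) a b := by
  simp only [Matrix.single, Matrix.of_apply]
  split_ifs
  · exact hc
  · exact le_rfl

lemma mem_Kset_of_opt (A Yhat : Matrix (Fin n) (Fin n) ℝ)
    (hA : ∀ i j, A j i = A i j) (hYhat : FeasSDP Yhat)
    (hopt : ∀ Y, FeasSDP Y → mip Y A ≤ mip Yhat A) :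
    A ∈ Kset (mip Yhat A) := by
  set p : ℝ := mip Yhat A with hp
  have hp0 : 0 ≤ p := by
    have := hopt 0 feas_zero
    rw [mip_zero_left] at this
    linarith
  by_contra hA_not
  haveI : LocallyConvexSpace ℝ (Matrix (Fin n) (Fin n) ℝ) := NormedSpace.toLocallyConvexSpace
  obtain ⟨f, u, hfK, hfA⟩ :=
    geometric_hahn_banach_closed_point (convex_Kset p) (isClosed_Kset p) hA_not
  set Yf : Matrix (Fin n) (Fin n) ℝ := Matrix.of fun i j => f (single i j 1) with hYf
  have hrep : ∀ X, f X = mip Yf X := rep_clm f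
  have hu0 : 0 < u := by
    have h0 : (0 : Matrix (Fin n) (Fin n) ℝ) ∈ Kset p :=
      ⟨0, 0, 0, fun _ _ => le_refl _, fun _ _ => le_refl _, Matrix.PosSemidef.zero,
        by simpa using hp0, by simp⟩
    have := hfK 0 h0
    simpa using this
  have hYfnn : ∀ i j, 0 ≤ Yf i j := by
    intro i j
    by_contra hneg
    push_neg at hneg
    set t : ℝ := (u + 1) / (-Yf i j) with ht
    have htpos : 0 < t := div_pos (by linarith) (by linarith)
    have hmem : -(t • single i j (1:ℝ)) ∈ Kset p :=
      ⟨0, t • single i j 1, 0, fun _ _ => le_refl _,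
        fun a b => by
          simp only [Matrix.smul_apply, smul_eq_mul]
          exact mul_nonneg htpos.le (sbm_entry_nonneg i j zero_le_one a b),
        Matrix.PosSemidef.zero, by simpa using hp0, by simp⟩
    have hlt := hfK _ hmem
    rw [map_neg, _root_.map_smul, smul_eq_mul] at hlt
    have hfe : f (single i j (1:ℝ)) = Yf i j := rfl
    rw [hfe] at hlt
    have hne : Yf i j ≠ 0 := ne_of_lt hneg
    have : -(t * Yf i j) = u + 1 := by
      rw [ht]
      field_simp
    rw [this] at hlt
    linarith
  have hYfquad : ∀ x : Fin n → ℝ, 0 ≤ mip Yf (vecMulVec x x) := by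
    intro x
    by_contra hneg
    push_neg at hneg
    set V := vecMulVec x x with hV
    set t : ℝ := (u + 1) / (-mip Yf V) with ht
    have htpos : 0 < t := div_pos (by linarith) (by linarith)
    have hmem : -(t • V) ∈ Kset p :=
      ⟨0, 0, t • V, fun _ _ => le_refl _, fun _ _ => le_refl _,
        psd_smul (psd_vecMulVec x) htpos.le, by simpa using hp0, by simp⟩
    have hlt := hfK _ hmem
    rw [map_neg, _root_.map_smul, smul_eq_mul, hrep] at hlt
    have hne : mip Yf V ≠ 0 := ne_of_lt hneg
    have : -(t * mip Yf V) = u + 1 := by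
      rw [ht]; field_simp
    rw [this] at hlt
    linarith
  have hUb : ∀ i j, p * Yf i j ≤ u := by
    intro i j
    have hmem : (single i j p : Matrix (Fin n) (Fin n) ℝ) ∈ Kset p :=
      ⟨single i j p, 0, 0, sbm_entry_nonneg i j hp0, fun _ _ => le_refl _,
        Matrix.PosSemidef.zero, le_of_eq (sum_stdBasisMatrix_entries i j p), by simp⟩
    have hlt := hfK _ hmem
    have : single i j p = p • single i j (1:ℝ) := by
      rw [smul_single, smul_eq_mul, mul_one]
    rw [this, _root_.map_smul, smul_eq_mul] at hlt
    exact le_of_lt hlt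
  have hfAgt : u < mip Yf A := by rw [← hrep]; exact hfA
  -- symmetrized matrix W
  set W : Matrix (Fin n) (Fin n) ℝ := (2⁻¹ : ℝ) • (Yf + Yfᵀ) with hW
  have hWentry : ∀ i j, W i j = (Yf i j + Yf j i) / 2 := by
    intro i j
    simp only [hW, Matrix.smul_apply, Matrix.add_apply, transpose_apply, smul_eq_mul]
    ring
  have hWnn : ∀ i j, 0 ≤ W i j := by
    intro i j
    rw [hWentry]
    have := hYfnn i j; have := hYfnn j i
    linarith
  have hsumswap : ∀ g : Fin n → Fin n → ℝ, ∑ i, ∑ j, g i j = ∑ i, ∑ j, g j i :=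
    fun g => Finset.sum_comm
  have hWpsd : W.PosSemidef := by
    refine Matrix.PosSemidef.of_dotProduct_mulVec_nonneg ?_ ?_
    · ext i j
      simp only [Matrix.conjTranspose_apply, star_trivial]
      rw [hWentry, hWentry]
      ring
    · intro x
      simp only [star_trivial]
      rw [quadform_eq]
      have key : ∑ i, ∑ j, x i * W i j * x j = mip Yf (vecMulVec x x) := by
        have e1 : ∀ i j, x i * W i j * x j
            = 2⁻¹ * (x i * Yf i j * x j) + 2⁻¹ * (x i * Yf j i * x j) := by
          intro i j; rw [hWentry]; ring
        simp only [e1, Finset.sum_add_distrib, ← Finset.mul_sum]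
        have e2 : ∑ i, ∑ j, x i * Yf j i * x j = ∑ i, ∑ j, x i * Yf i j * x j := by
          rw [hsumswap (fun i j => x i * Yf j i * x j)]
          exact Finset.sum_congr rfl fun i _ => Finset.sum_congr rfl fun j _ => by ring
        rw [e2]
        have e3 : mip Yf (vecMulVec x x) = ∑ i, ∑ j, x i * Yf i j * x j := by
          unfold mip
          exact Finset.sum_congr rfl fun i _ => Finset.sum_congr rfl fun j _ => by
            simp [vecMulVec_apply]; ring
        rw [e3]; ring
      rw [key]
      exact hYfquad x
  have hWA : mip W A = mip Yf A := by
    unfold mip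
    have e1 : ∀ i j, W i j * A i j
        = 2⁻¹ * (Yf i j * A i j) + 2⁻¹ * (Yf j i * A i j) := by
      intro i j; rw [hWentry]; ring
    simp only [e1, Finset.sum_add_distrib, ← Finset.mul_sum]
    have e2 : ∑ i, ∑ j, Yf j i * A i j = ∑ i, ∑ j, Yf i j * A i j := by
      rw [hsumswap (fun i j => Yf j i * A i j)]
      exact Finset.sum_congr rfl fun i _ => Finset.sum_congr rfl fun j _ => by
        rw [hA i j]
    rw [e2]; ring
  have hfAgt' : u < mip W A := by rw [hWA]; exact hfAgt
  -- n must be positive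
  rcases Nat.eq_zero_or_pos n with hn0 | hn
  · subst hn0
    have : mip W A = 0 := by simp [mip]
    linarith
  obtain ⟨q, -, hq⟩ := Finset.exists_max_image Finset.univ
    (fun q : Fin n × Fin n => W q.1 q.2) ⟨(⟨0, hn⟩, ⟨0, hn⟩), Finset.mem_univ _⟩
  set m : ℝ := W q.1 q.2 with hm
  have hWle : ∀ i j, W i j ≤ m := fun i j => hq (i, j) (Finset.mem_univ _)
  have hmpos : 0 < m := by
    by_contra hmn
    push_neg at hmn
    have hz : ∀ i j, W i j = 0 := fun i j =>
      le_antisymm (le_trans (hWle i j) hmn) (hWnn i j)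
    have : mip W A = 0 := by
      unfold mip
      refine Finset.sum_eq_zero fun i _ => Finset.sum_eq_zero fun j _ => ?_
      rw [hz i j, zero_mul]
    linarith
  set Y' : Matrix (Fin n) (Fin n) ℝ := m⁻¹ • W with hY'
  have hY'feas : FeasSDP Y' := by
    refine ⟨psd_smul hWpsd (inv_nonneg.mpr hmpos.le), fun i j => ?_⟩
    constructor
    · exact mul_nonneg (inv_nonneg.mpr hmpos.le) (hWnn i j)
    · have h1 : m⁻¹ * W i j ≤ m⁻¹ * m :=
        mul_le_mul_of_nonneg_left (hWle i j) (inv_nonneg.mpr hmpos.le)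
      rw [inv_mul_cancel₀ hmpos.ne'] at h1
      simpa [hY', Matrix.smul_apply, smul_eq_mul] using h1
  have hle := hopt Y' hY'feas
  have hY'A : mip Y' A = m⁻¹ * mip W A := by
    rw [hY', mip_comm, mip_smul_right, mip_comm A W]
  have hpmu : p * m ≤ u := by
    have h1 := hUb q.1 q.2
    have h2 := hUb q.2 q.1
    have h3 : m = (Yf q.1 q.2 + Yf q.2 q.1) / 2 := hWentry q.1 q.2
    nlinarith
  have hstep : p ≤ m⁻¹ * u := by
    have := mul_le_mul_of_nonneg_right hpmu (inv_nonneg.mpr hmpos.le)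
    rw [mul_assoc, mul_inv_cancel₀ hmpos.ne', mul_one] at this
    linarith [this]
  have hgt : m⁻¹ * u < m⁻¹ * mip W A :=
    mul_lt_mul_of_pos_left hfAgt' (inv_pos.mpr hmpos)
  rw [hY'A] at hle
  linarith

end Part5

section Part6
variable {n : ℕ}

lemma mip_def (X Y : Matrix (Fin n) (Fin n) ℝ) :
    mip X Y = ∑ i, ∑ j, X i j * Y i j := rfl

lemma sum2_eq_zero {g : Fin n → Fin n → ℝ} (hg : ∀ i j, 0 ≤ g i j)
    (h : ∑ i, ∑ j, g i j = 0) : ∀ i j, g i j = 0 := by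
  intro i j
  have hrow : ∀ i' ∈ Finset.univ, 0 ≤ ∑ j', g i' j' :=
    fun i' _ => Finset.sum_nonneg fun j' _ => hg i' j'
  have h1 : ∑ j', g i j' = 0 :=
    (Finset.sum_eq_zero_iff_of_nonneg hrow).mp h i (Finset.mem_univ i)
  exact (Finset.sum_eq_zero_iff_of_nonneg fun j' _ => hg i j').mp h1 j (Finset.mem_univ j)

lemma mip_eq_trace (X Y : Matrix (Fin n) (Fin n) ℝ) (hY : Yᵀ = Y) :
    mip X Y = Matrix.trace (X * Y) := by
  rw [Matrix.trace]
  unfold mip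
  refine Finset.sum_congr rfl fun i _ => ?_
  rw [Matrix.diag_apply, Matrix.mul_apply]
  refine Finset.sum_congr rfl fun j _ => ?_
  have := congrFun (congrFun hY i) j
  rw [Matrix.transpose_apply] at this
  rw [this]

end Part6

/-- KKT conditions for the recovery SDP: `Ŷ ∈ F_n` maximizes `⟨Y, M⟩ − λ·tr(Y)` over `F_n`
iff there exist entrywise-nonnegative dual matrices `U, L` with complementary slackness,
`M − λI − U + L` negative semidefinite, and `(M − λI − U + L)·Ŷ = 0`. -/
theorem recovery_sdp_kkt
    {n : ℕ} (M : Matrix (Fin n) (Fin n) ℝ) (hM : M.IsHermitian) (lam : ℝ)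
    (Yhat : Matrix (Fin n) (Fin n) ℝ) (hYhat : FeasSDP Yhat) :
    (∀ Y, FeasSDP Y → mip Y M - lam * Y.trace ≤ mip Yhat M - lam * Yhat.trace) ↔
      ∃ U L : Matrix (Fin n) (Fin n) ℝ,
        (∀ i j, 0 ≤ U i j) ∧ (∀ i j, 0 ≤ L i j) ∧
        (∀ i j, L i j * Yhat i j = 0) ∧ (∀ i j, U i j * (Yhat i j - 1) = 0) ∧
        (-(M - lam • (1 : Matrix (Fin n) (Fin n) ℝ) - U + L)).PosSemidef ∧
        (M - lam • (1 : Matrix (Fin n) (Fin n) ℝ) - U + L) * Yhat = 0 := by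
  set A : Matrix (Fin n) (Fin n) ℝ := M - lam • (1 : Matrix (Fin n) (Fin n) ℝ) with hA
  have hAsym : ∀ i j, A j i = A i j := by
    intro i j
    have hm : M j i = M i j := herm_apply hM i j
    simp only [hA, Matrix.sub_apply, Matrix.smul_apply, Matrix.one_apply, smul_eq_mul, hm]
    by_cases h : i = j
    · subst h; simp
    · simp [h, Ne.symm h]
  have hYsym : Yhatᵀ = Yhat := by
    ext i j
    rw [Matrix.transpose_apply]
    exact herm_apply hYhat.1.1 i j
  constructor
  · intro hopt
    have hopt' : ∀ Y, FeasSDP Y → mip Y A ≤ mip Yhat A := by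
      intro Y hY
      have := hopt Y hY
      rwa [obj_eq, obj_eq] at this
    obtain ⟨U, L, S, hU, hL, hS, hsum, hdec⟩ := mem_Kset_of_opt A Yhat hAsym hYhat hopt'
    have hmipdec : mip Yhat A = mip Yhat U - mip Yhat L - mip Yhat S := by
      rw [hdec, mip_sub_right, mip_sub_right]
    have hLnn : 0 ≤ mip Yhat L := by
      rw [mip_def]
      exact Finset.sum_nonneg fun i _ => Finset.sum_nonneg fun j _ =>
        mul_nonneg (hYhat.2 i j).1 (hL i j)
    have hSnn : 0 ≤ mip Yhat S := by
      rw [mip_comm]; exact psd_mip_nonneg hS hYhat.1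
    have hUle : mip Yhat U ≤ ∑ i, ∑ j, U i j := by
      rw [mip_def]
      exact Finset.sum_le_sum fun i _ => Finset.sum_le_sum fun j _ =>
        mul_le_of_le_one_left (hU i j) (hYhat.2 i j).2
    have hLz : mip Yhat L = 0 := by linarith
    have hSz : mip Yhat S = 0 := by linarith
    have hUeq : mip Yhat U = ∑ i, ∑ j, U i j := by linarith
    refine ⟨U, L, hU, hL, ?_, ?_, ?_, ?_⟩
    · intro i j
      have := sum2_eq_zero (g := fun i j => Yhat i j * L i j)
        (fun i j => mul_nonneg (hYhat.2 i j).1 (hL i j)) (by rw [← mip_def]; exact hLz) i j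
      rw [mul_comm]; exact this
    · intro i j
      have hz : ∑ i, ∑ j, (U i j - Yhat i j * U i j) = 0 := by
        simp only [Finset.sum_sub_distrib]
        rw [← mip_def]
        linarith
      have h0 : U i j - Yhat i j * U i j = 0 :=
        sum2_eq_zero (g := fun i j => U i j - Yhat i j * U i j)
          (fun i j => by
            show 0 ≤ U i j - Yhat i j * U i j
            have h1 := hU i j
            have h2 := (hYhat.2 i j).2
            nlinarith) hz i j
      linear_combination -h0
    · have hSeq : -(A - U + L) = S := by rw [hdec]; abel
      rw [hSeq]; exact hS
    · have hSYhat : S * Yhat = 0 := by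
        refine psd_mip_zero hS hYhat.1 ?_
        rw [mip_comm]; exact hSz
      have hSeq : A - U + L = -S := by rw [hdec]; abel
      rw [hSeq, Matrix.neg_mul, hSYhat, neg_zero]
  · rintro ⟨U, L, hU, hL, hLc, hUc, hPSD, hprod⟩
    intro Y hY
    rw [obj_eq, obj_eq]
    set S : Matrix (Fin n) (Fin n) ℝ := -(A - U + L) with hSdef
    have hdec : A = U - L - S := by rw [hSdef]; abel
    have hprod' : S * Yhat = 0 := by
      rw [hSdef, Matrix.neg_mul, hprod, neg_zero]
    have key1 : mip Y A ≤ ∑ i, ∑ j, U i j := by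
      have e : mip Y A = mip Y U - mip Y L - mip Y S := by
        rw [hdec, mip_sub_right, mip_sub_right]
      have h1 : mip Y U ≤ ∑ i, ∑ j, U i j := by
        rw [mip_def]
        exact Finset.sum_le_sum fun i _ => Finset.sum_le_sum fun j _ =>
          mul_le_of_le_one_left (hU i j) (hY.2 i j).2
      have h2 : 0 ≤ mip Y L := by
        rw [mip_def]
        exact Finset.sum_nonneg fun i _ => Finset.sum_nonneg fun j _ =>
          mul_nonneg (hY.2 i j).1 (hL i j)
      have h3 : 0 ≤ mip Y S := by
        rw [mip_comm]; exact psd_mip_nonneg hPSD hY.1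
      linarith
    have key2 : mip Yhat A = ∑ i, ∑ j, U i j := by
      have e : mip Yhat A = mip Yhat U - mip Yhat L - mip Yhat S := by
        rw [hdec, mip_sub_right, mip_sub_right]
      have h1 : mip Yhat U = ∑ i, ∑ j, U i j := by
        rw [mip_def]
        refine Finset.sum_congr rfl fun i _ => Finset.sum_congr rfl fun j _ => ?_
        linear_combination hUc i j
      have h2 : mip Yhat L = 0 := by
        rw [mip_def]
        refine Finset.sum_eq_zero fun i _ => Finset.sum_eq_zero fun j _ => ?_
        rw [mul_comm]; exact hLc i j
      have h3 : mip Yhat S = 0 := by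
        rw [mip_comm, mip_eq_trace S Yhat hYsym, hprod']
        simp
      linarith
    linarith
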